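/- For every d, t ∈ ℕ with t ≤ d and every ξ ∈ 𝕋^d one has | s_t(ξ) − (1/|S_t|) Σ_{x ∈ S_t} (−1)^{Σ_{i ∈ V_ξ} x_i} | ≤ 2 · (t/d) · Σ_{i=1}^d cos²(π ξ_i). -/

import Mathlib

open Finset

noncomputable section

/-- `S_t = {x ∈ {-1,0,1}^d : Σ |x_i| = t}`. -/
def sphereS (d t : ℕ) : Finset (Fin d → ℤ) :=
  (Finset.Icc (fun _ => (-1 : ℤ)) (fun _ => (1 : ℤ))).filter fun y => ∑ i, |y i| = (t : ℤ)

/-- `s_t(ξ) = |S_t|⁻¹ Σ_{x ∈ S_t} e(x·ξ)`, where `e(y) = e^{2πiy}`. -/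
def sMul (d t : ℕ) (ξ : Fin d → ℝ) : ℂ :=
  ((sphereS d t).card : ℂ)⁻¹ *
    ∑ x ∈ sphereS d t, Complex.exp (2 * (Real.pi : ℂ) * Complex.I * ∑ k, (x k : ℂ) * (ξ k : ℂ))

/-- `V_ξ = {i ∈ {1,…,d} : cos(2π ξ_i) < 0}`. -/
def Vset (d : ℕ) (ξ : Fin d → ℝ) : Finset (Fin d) :=
  Finset.univ.filter fun i => Real.cos (2 * Real.pi * ξ i) < 0

/-! ### Auxiliary lemmas -/

lemma aux_one_sub_prod_le {ι : Type*} (A : Finset ι) (c : ι → ℝ) (h : ∀ k ∈ A, |c k| ≤ 1) :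
    1 - ∏ k ∈ A, c k ≤ ∑ k ∈ A, (1 - c k) := by
  classical
  induction A using Finset.cons_induction with
  | empty => simp
  | cons a A ha ih =>
    rw [Finset.prod_cons, Finset.sum_cons]
    have hP : |∏ k ∈ A, c k| ≤ 1 := by
      rw [Finset.abs_prod]
      exact Finset.prod_le_one (fun k _ => abs_nonneg _)
        (fun k hk => h k (Finset.mem_cons.2 (Or.inr hk)))
    have hca : |c a| ≤ 1 := h a (Finset.mem_cons_self a A)
    have ih' := ih (fun k hk => h k (Finset.mem_cons.2 (Or.inr hk)))
    nlinarith [abs_le.1 hP, abs_le.1 hca]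

lemma aux_count_mem_powersetCard {d t : ℕ} (ht0 : 1 ≤ t) (k : Fin d) :
    ((Finset.univ.powersetCard t (α := Fin d)).filter fun A => k ∈ A).card
      = (d - 1).choose (t - 1) := by
  classical
  have : ((Finset.univ.powersetCard t (α := Fin d)).filter fun A => k ∈ A).card
      = ((Finset.univ.erase k).powersetCard (t - 1)).card := by
    apply Finset.card_bij' (fun A _ => A.erase k) (fun B _ => insert k B)
    · intro A hA
      simp only [Finset.mem_filter] at hA
      exact Finset.insert_erase hA.2
    · intro B hB
      rw [Finset.mem_powersetCard] at hB
      have hkB : k ∉ B := fun h => (Finset.mem_erase.1 (hB.1 h)).1 rfl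
      exact Finset.erase_insert hkB
    · intro A hA
      simp only [Finset.mem_filter, Finset.mem_powersetCard] at hA
      rw [Finset.mem_powersetCard]
      constructor
      · intro x hx
        simp only [Finset.mem_erase] at hx ⊢
        exact ⟨hx.1, Finset.mem_univ x⟩
      · rw [Finset.card_erase_of_mem hA.2, hA.1.2]
    · intro B hB
      rw [Finset.mem_powersetCard] at hB
      have hkB : k ∉ B := fun h => (Finset.mem_erase.1 (hB.1 h)).1 rfl
      simp only [Finset.mem_filter, Finset.mem_powersetCard]
      refine ⟨⟨fun x _ => Finset.mem_univ x, ?_⟩, Finset.mem_insert_self k B⟩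
      rw [Finset.card_insert_of_notMem hkB, hB.2]
      omega
  rw [this, Finset.card_powersetCard, Finset.card_erase_of_mem (Finset.mem_univ k),
    Finset.card_univ, Fintype.card_fin]

/-- the family of allowed values at each coordinate, for support `A`. -/
def Tfam {d : ℕ} (A : Finset (Fin d)) : Fin d → Finset ℤ :=
  fun k => if k ∈ A then ({-1, 1} : Finset ℤ) else {0}

lemma aux_mem_sphereS {d t : ℕ} (x : Fin d → ℤ) :
    x ∈ sphereS d t ↔ (∀ k, -1 ≤ x k ∧ x k ≤ 1) ∧ ∑ i, |x i| = (t : ℤ) := by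
  simp only [sphereS, Finset.mem_filter, Finset.mem_Icc, Pi.le_def, and_congr_left_iff]
  intro _
  constructor
  · exact fun h k => ⟨h.1 k, h.2 k⟩
  · exact fun h => ⟨fun k => (h k).1, fun k => (h k).2⟩

lemma aux_supp_card {d t : ℕ} (x : Fin d → ℤ) (hx : x ∈ sphereS d t) :
    (Finset.univ.filter fun k => x k ≠ 0).card = t := by
  rw [aux_mem_sphereS] at hx
  have h1 : ∑ i ∈ Finset.univ.filter (fun k => x k ≠ 0), |x i| = ∑ i, |x i| := by
    apply Finset.sum_filter_of_ne
    intro k _ h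
    intro h0
    exact h (by rw [h0]; simp)
  have h2 : ∀ k ∈ Finset.univ.filter (fun k => x k ≠ 0), |x k| = 1 := by
    intro k hk
    have hne := (Finset.mem_filter.1 hk).2
    have hb1 := (hx.1 k).1; have hb2 := (hx.1 k).2
    have : x k = -1 ∨ x k = 1 := by omega
    rcases this with h | h <;> simp [h]
  have h3 := hx.2
  rw [← h1, Finset.sum_congr rfl h2, Finset.sum_const, nsmul_eq_mul, mul_one] at h3
  exact_mod_cast h3

lemma aux_fiber_eq {d t : ℕ} (A : Finset (Fin d)) (hA : A.card = t) :
    (sphereS d t).filter (fun x => Finset.univ.filter (fun k => x k ≠ 0) = A)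
      = Fintype.piFinset (Tfam A) := by
  classical
  ext x
  simp only [Finset.mem_filter, aux_mem_sphereS, Fintype.mem_piFinset, Tfam]
  constructor
  · rintro ⟨⟨hb, hs⟩, hsupp⟩ k
    by_cases hk : k ∈ A
    · rw [if_pos hk]
      have : x k ≠ 0 := by
        have hk' : k ∈ Finset.univ.filter (fun k => x k ≠ 0) := hsupp ▸ hk
        exact (Finset.mem_filter.1 hk').2
      have h1 := (hb k).1; have h2 := (hb k).2
      simp only [Finset.mem_insert, Finset.mem_singleton]
      omega
    · rw [if_neg hk]
      simp only [Finset.mem_singleton]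
      by_contra hne
      exact hk (hsupp ▸ Finset.mem_filter.2 ⟨Finset.mem_univ k, hne⟩)
  · intro h
    have hval : ∀ k, (k ∈ A → x k = -1 ∨ x k = 1) ∧ (k ∉ A → x k = 0) := by
      intro k
      constructor
      · intro hk; have := h k; rw [if_pos hk] at this; simpa using this
      · intro hk; have := h k; rw [if_neg hk] at this; simpa using this
    refine ⟨⟨fun k => ?_, ?_⟩, ?_⟩
    · rcases (em (k ∈ A)) with hk | hk
      · rcases (hval k).1 hk with h1 | h1 <;> omega
      · have := (hval k).2 hk; omega
    · rw [← hA]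
      rw [← Finset.sum_filter_add_sum_filter_not Finset.univ (fun k => k ∈ A)]
      have e1 : ∀ k ∈ Finset.univ.filter (fun k => k ∈ A), |x k| = 1 := by
        intro k hk
        rcases (hval k).1 (Finset.mem_filter.1 hk).2 with h1 | h1 <;> simp [h1]
      have e2 : ∀ k ∈ Finset.univ.filter (fun k => ¬ (k ∈ A)), |x k| = 0 := by
        intro k hk
        rw [(hval k).2 (Finset.mem_filter.1 hk).2]; simp
      rw [Finset.sum_congr rfl e1, Finset.sum_congr rfl e2, Finset.sum_const, Finset.sum_const]
      simp [Finset.filter_mem_eq_inter]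
    · ext k
      simp only [Finset.mem_filter, Finset.mem_univ, true_and]
      constructor
      · intro hk; by_contra hkA; exact hk ((hval k).2 hkA)
      · intro hk; rcases (hval k).1 hk with h1 | h1 <;> omega

lemma aux_card_fiber {d t : ℕ} (A : Finset (Fin d)) (hA : A.card = t) :
    (Fintype.piFinset (Tfam A)).card = 2 ^ t := by
  classical
  rw [Fintype.card_piFinset]
  rw [← Finset.prod_filter_mul_prod_filter_not Finset.univ (fun k => k ∈ A)]
  have e1 : ∀ k ∈ Finset.univ.filter (fun k => k ∈ A), (Tfam A k).card = 2 := by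
    intro k hk; simp [Tfam, (Finset.mem_filter.1 hk).2]
  have e2 : ∀ k ∈ Finset.univ.filter (fun k => ¬ (k ∈ A)), (Tfam A k).card = 1 := by
    intro k hk; simp [Tfam, (Finset.mem_filter.1 hk).2]
  rw [Finset.prod_congr rfl e1, Finset.prod_congr rfl e2, Finset.prod_const, Finset.prod_const]
  simp [Finset.filter_mem_eq_inter, hA]

lemma aux_sphere_decomp {d t : ℕ} {M : Type*} [AddCommMonoid M] (f : (Fin d → ℤ) → M) :
    ∑ x ∈ sphereS d t, f x
      = ∑ A ∈ Finset.univ.powersetCard t, ∑ x ∈ Fintype.piFinset (Tfam A), f x := by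
  classical
  rw [← Finset.sum_fiberwise_of_maps_to
    (g := fun x => Finset.univ.filter (fun k => x k ≠ 0)) (fun x hx => by
      rw [Finset.mem_powersetCard]
      exact ⟨Finset.subset_univ _, aux_supp_card x hx⟩)]
  apply Finset.sum_congr rfl
  intro A hA
  rw [aux_fiber_eq A (Finset.mem_powersetCard.1 hA).2]

lemma aux_fiber_exp_sum {d : ℕ} (A : Finset (Fin d)) (η : Fin d → ℝ) :
    ∑ x ∈ Fintype.piFinset (Tfam A),
        Complex.exp (2 * (Real.pi : ℂ) * Complex.I * ∑ k, (x k : ℂ) * (η k : ℂ))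
      = ((∏ k ∈ A, 2 * Real.cos (2 * Real.pi * η k) : ℝ) : ℂ) := by
  classical
  have key : ∀ x : Fin d → ℤ,
      Complex.exp (2 * (Real.pi : ℂ) * Complex.I * ∑ k, (x k : ℂ) * (η k : ℂ))
        = ∏ k, Complex.exp (2 * (Real.pi : ℂ) * Complex.I * ((x k : ℂ) * (η k : ℂ))) := by
    intro x
    rw [Finset.mul_sum, Complex.exp_sum]
  simp_rw [key]
  rw [← Finset.prod_univ_sum (t := Tfam A)
    (f := fun k m => Complex.exp (2 * (Real.pi : ℂ) * Complex.I * ((m : ℂ) * (η k : ℂ))))]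
  have inner : ∀ k : Fin d, ∑ m ∈ Tfam A k,
      Complex.exp (2 * (Real.pi : ℂ) * Complex.I * ((m : ℂ) * (η k : ℂ)))
      = if k ∈ A then ((2 * Real.cos (2 * Real.pi * η k) : ℝ) : ℂ) else 1 := by
    intro k
    by_cases hk : k ∈ A
    · rw [if_pos hk]
      have : Tfam A k = ({-1, 1} : Finset ℤ) := by rw [Tfam, if_pos hk]
      rw [this, Finset.sum_insert (by decide), Finset.sum_singleton]
      have h2 := Complex.two_cos (x := ((2 * Real.pi * η k : ℝ) : ℂ))
      push_cast [Complex.ofReal_cos] at h2 ⊢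
      rw [h2]
      ring_nf
    · rw [if_neg hk]
      have : Tfam A k = ({0} : Finset ℤ) := by rw [Tfam, if_neg hk]
      rw [this, Finset.sum_singleton]
      push_cast
      simp
  rw [Finset.prod_congr rfl (fun k _ => inner k), Finset.prod_ite_mem, Finset.univ_inter]
  push_cast
  ring

lemma aux_neg_mem_sphereS {d t : ℕ} (x : Fin d → ℤ) (hx : x ∈ sphereS d t) :
    -x ∈ sphereS d t := by
  rw [aux_mem_sphereS] at hx ⊢
  refine ⟨fun k => ?_, ?_⟩
  · have := hx.1 k; simp only [Pi.neg_apply]; omega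
  · simp only [Pi.neg_apply, abs_neg]; exact hx.2

lemma aux_sum_exp_real {d t : ℕ} (φ : (Fin d → ℤ) → ℝ) (hodd : ∀ x, φ (-x) = - φ x) :
    ∑ x ∈ sphereS d t, Complex.exp ((φ x : ℂ) * Complex.I)
      = ((∑ x ∈ sphereS d t, Real.cos (φ x) : ℝ) : ℂ) := by
  classical
  set S := ∑ x ∈ sphereS d t, Complex.exp ((φ x : ℂ) * Complex.I) with hS
  have hconj : (starRingEnd ℂ) S = S := by
    rw [hS, map_sum]
    have e1 : ∀ x : Fin d → ℤ, (starRingEnd ℂ) (Complex.exp ((φ x : ℂ) * Complex.I))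
        = Complex.exp ((φ (-x) : ℂ) * Complex.I) := by
      intro x
      rw [← Complex.exp_conj]
      congr 1
      rw [hodd x]
      push_cast
      simp [Complex.conj_I, Complex.conj_ofReal]
    rw [Finset.sum_congr rfl (fun x _ => e1 x)]
    apply Finset.sum_nbij' (i := fun x => -x) (j := fun x => -x)
    · intro a ha; exact aux_neg_mem_sphereS a ha
    · intro a ha; exact aux_neg_mem_sphereS a ha
    · intro a _; simp
    · intro a _; simp
    · intro a _; simp
  have hre : S = ((S.re : ℝ) : ℂ) := (Complex.conj_eq_iff_re.1 hconj).symm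
  rw [hre]
  congr 1
  rw [hS, Complex.re_sum]
  exact Finset.sum_congr rfl (fun x _ => Complex.exp_ofReal_mul_I_re (φ x))

/-- Lemma 4.5: for `t ≤ d` and every `ξ ∈ 𝕋^d`,
`|s_t(ξ) - |S_t|⁻¹ Σ_{x ∈ S_t} (-1)^{Σ_{i ∈ V_ξ} x_i}| ≤ 2 (t/d) Σ cos²(π ξ_i)`. -/
theorem sMul_sub_signed_sum_bound (d t : ℕ) (ht0 : 1 ≤ t) (ht : t ≤ d) (ξ : Fin d → ℝ) :
    ‖sMul d t ξ -
        ((sphereS d t).card : ℂ)⁻¹ * ∑ x ∈ sphereS d t, (-1 : ℂ) ^ (∑ i ∈ Vset d ξ, x i)‖ ≤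
      2 * ((t : ℝ) / d) * ∑ i, Real.cos (Real.pi * ξ i) ^ 2 := by
  classical
  set V := Vset d ξ with hV
  set η : Fin d → ℝ := fun k => ξ k - (if k ∈ V then 1/2 else 0) with hη
  set c : Fin d → ℝ := fun k => Real.cos (2 * Real.pi * η k) with hc
  set φ : (Fin d → ℤ) → ℝ := fun x => ∑ k, (x k : ℝ) * ξ k with hφ
  set ψ : (Fin d → ℤ) → ℝ := fun x => ∑ k, (x k : ℝ) * η k with hψ
  set n : (Fin d → ℤ) → ℤ := fun x => ∑ i ∈ V, x i with hn
  have hd1 : 1 ≤ d := le_trans ht0 ht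
  -- the cosine bounds
  have hcle : ∀ k, |c k| ≤ 1 := fun k => Real.abs_cos_le_one _
  have hckey : ∀ k, 1 - c k ≤ 2 * Real.cos (Real.pi * ξ k) ^ 2 := by
    intro k
    have hdouble : Real.cos (2 * Real.pi * ξ k) = 2 * Real.cos (Real.pi * ξ k) ^ 2 - 1 := by
      rw [show 2 * Real.pi * ξ k = 2 * (Real.pi * ξ k) by ring, Real.cos_two_mul]
    by_cases hk : k ∈ V
    · have : c k = - Real.cos (2 * Real.pi * ξ k) := by
        rw [hc]
        simp only [hη, if_pos hk]
        rw [show 2 * Real.pi * (ξ k - 1/2) = 2 * Real.pi * ξ k - Real.pi by ring,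
          Real.cos_sub_pi]
      rw [this, hdouble]; ring_nf; linarith
    · have hge : 0 ≤ Real.cos (2 * Real.pi * ξ k) := by
        have := hk
        rw [hV, Vset, Finset.mem_filter] at this
        push_neg at this
        exact this (Finset.mem_univ k)
      have : c k = Real.cos (2 * Real.pi * ξ k) := by
        rw [hc]; simp only [hη, if_neg hk]; ring_nf
      rw [this, hdouble] at *
      linarith
  -- counting
  set C := d.choose t with hC
  set D := (d-1).choose (t-1) with hD
  have hCpos : 0 < C := Nat.choose_pos ht
  have hDC : d * D = t * C := by
    have h := Nat.add_one_mul_choose_eq (d-1) (t-1)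
    have e1 : d - 1 + 1 = d := by omega
    have e2 : t - 1 + 1 = t := by omega
    rw [e1, e2] at h
    rw [hD, hC, h]; ring
  have hcard : (sphereS d t).card = 2 ^ t * C := by
    calc (sphereS d t).card = ∑ _x ∈ sphereS d t, 1 := Finset.card_eq_sum_ones _
      _ = ∑ A ∈ Finset.univ.powersetCard t, ∑ _x ∈ Fintype.piFinset (Tfam A), 1 :=
          aux_sphere_decomp _
      _ = 2 ^ t * C := by
          have h2 : ∀ A ∈ Finset.univ.powersetCard t (α := Fin d),
              ∑ _x ∈ Fintype.piFinset (Tfam A), 1 = 2 ^ t := by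
            intro A hA
            rw [← Finset.card_eq_sum_ones, aux_card_fiber A (Finset.mem_powersetCard.1 hA).2]
          rw [Finset.sum_congr rfl h2, Finset.sum_const, smul_eq_mul,
            Finset.card_powersetCard, Finset.card_univ, Fintype.card_fin, hC]
          ring
  -- relation between φ, ψ, n
  have hsub : ∀ x : Fin d → ℤ, φ x - ψ x = (n x : ℝ) / 2 := by
    intro x
    rw [hφ, hψ, ← Finset.sum_sub_distrib]
    have e : ∀ k, (x k : ℝ) * ξ k - (x k : ℝ) * η k
        = if k ∈ V then (x k : ℝ) / 2 else 0 := by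
      intro k
      simp only [hη]
      by_cases hk : k ∈ V <;> simp [hk] <;> ring_nf
    rw [Finset.sum_congr rfl (fun k _ => e k), Finset.sum_ite_mem, Finset.univ_inter, hn]
    push_cast
    rw [Finset.sum_div]
  have hcosφ : ∀ x : Fin d → ℤ,
      Real.cos (2 * Real.pi * φ x) = (-1 : ℝ) ^ (n x) * Real.cos (2 * Real.pi * ψ x) := by
    intro x
    have : 2 * Real.pi * φ x = 2 * Real.pi * ψ x + (n x : ℝ) * Real.pi := by
      have h := hsub x
      linear_combination (2 * Real.pi) * h
    rw [this, Real.cos_add_int_mul_pi]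
  -- the exponential sum is real
  have hsum1 : ∑ x ∈ sphereS d t,
        Complex.exp (2 * (Real.pi : ℂ) * Complex.I * ∑ k, (x k : ℂ) * (ξ k : ℂ))
      = ((∑ x ∈ sphereS d t, Real.cos (2 * Real.pi * φ x) : ℝ) : ℂ) := by
    have hterm : ∀ x : Fin d → ℤ,
        Complex.exp (2 * (Real.pi : ℂ) * Complex.I * ∑ k, (x k : ℂ) * (ξ k : ℂ))
          = Complex.exp (((2 * Real.pi * φ x : ℝ) : ℂ) * Complex.I) := by
      intro x; congr 1; rw [hφ]; push_cast; ring
    rw [Finset.sum_congr rfl (fun x _ => hterm x)]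
    apply aux_sum_exp_real (φ := fun x => 2 * Real.pi * φ x)
    intro x
    have : φ (-x) = - φ x := by
      rw [hφ]
      simp only [Pi.neg_apply, Int.cast_neg, neg_mul]
      rw [← Finset.sum_neg_distrib]
    rw [this]; ring
  -- the signed sum is real
  have hsum2 : ∑ x ∈ sphereS d t, (-1 : ℂ) ^ (n x)
      = ((∑ x ∈ sphereS d t, (-1 : ℝ) ^ (n x) : ℝ) : ℂ) := by
    push_cast
    rfl
  -- rewrite the difference
  set R : ℝ := ∑ x ∈ sphereS d t, (Real.cos (2 * Real.pi * φ x) - (-1 : ℝ) ^ (n x)) with hR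
  have hdiff : sMul d t ξ -
      ((sphereS d t).card : ℂ)⁻¹ * ∑ x ∈ sphereS d t, (-1 : ℂ) ^ (∑ i ∈ V, x i)
      = ((sphereS d t).card : ℂ)⁻¹ * ((R : ℝ) : ℂ) := by
    rw [sMul, ← mul_sub, hsum1]
    have : ∑ x ∈ sphereS d t, (-1 : ℂ) ^ (∑ i ∈ V, x i)
        = ∑ x ∈ sphereS d t, (-1 : ℂ) ^ (n x) := by rw [hn]
    rw [this, hsum2, hR, Finset.sum_sub_distrib]
    push_cast
    ring
  rw [hdiff, norm_mul, norm_inv, Complex.norm_natCast, Complex.norm_real, Real.norm_eq_abs]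
  -- bound |R| by the ψ-sum
  have hRb : |R| ≤ ∑ x ∈ sphereS d t, (1 - Real.cos (2 * Real.pi * ψ x)) := by
    refine le_trans (Finset.abs_sum_le_sum_abs _ _) (Finset.sum_le_sum fun x _ => ?_)
    rw [hcosφ x]
    have : (-1 : ℝ) ^ (n x) * Real.cos (2 * Real.pi * ψ x) - (-1 : ℝ) ^ (n x)
        = (-1 : ℝ) ^ (n x) * (Real.cos (2 * Real.pi * ψ x) - 1) := by ring
    have habs : |(-1 : ℝ) ^ (n x)| = 1 := by
      rcases Int.even_or_odd (n x) with h | h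
      · rw [h.neg_one_zpow, abs_one]
      · rw [h.neg_one_zpow, abs_neg, abs_one]
    rw [this, abs_mul, habs, one_mul,
      abs_of_nonpos (by linarith [Real.cos_le_one (2 * Real.pi * ψ x)]), neg_sub]
  -- fiber cosine sums
  have hfibcos : ∀ A ∈ Finset.univ.powersetCard t (α := Fin d),
      ∑ x ∈ Fintype.piFinset (Tfam A), Real.cos (2 * Real.pi * ψ x)
        = ∏ k ∈ A, (2 * c k) := by
    intro A hA
    have h := aux_fiber_exp_sum A η
    have hterm : ∀ x : Fin d → ℤ,
        Complex.exp (2 * (Real.pi : ℂ) * Complex.I * ∑ k, (x k : ℂ) * (η k : ℂ))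
          = Complex.exp (((2 * Real.pi * ψ x : ℝ) : ℂ) * Complex.I) := by
      intro x; congr 1; rw [hψ]; push_cast; ring
    rw [Finset.sum_congr rfl (fun x _ => hterm x)] at h
    have h2 := congrArg Complex.re h
    rw [Complex.re_sum, Complex.ofReal_re] at h2
    simp only [Complex.exp_ofReal_mul_I_re] at h2
    rw [h2, hc]
  -- the main bound on the ψ-sum
  have hTbound : ∑ x ∈ sphereS d t, (1 - Real.cos (2 * Real.pi * ψ x))
      ≤ (2 : ℝ) ^ t * ((D : ℝ) * ∑ k, (1 - c k)) := by
    rw [aux_sphere_decomp (fun x => 1 - Real.cos (2 * Real.pi * ψ x))]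
    have hper : ∀ A ∈ Finset.univ.powersetCard t (α := Fin d),
        ∑ x ∈ Fintype.piFinset (Tfam A), (1 - Real.cos (2 * Real.pi * ψ x))
          ≤ (2 : ℝ) ^ t * ∑ k ∈ A, (1 - c k) := by
      intro A hA
      have hAcard := (Finset.mem_powersetCard.1 hA).2
      rw [Finset.sum_sub_distrib, Finset.sum_const, aux_card_fiber A hAcard, hfibcos A hA]
      have hprod : ∏ k ∈ A, (2 * c k) = (2 : ℝ) ^ t * ∏ k ∈ A, c k := by
        rw [Finset.prod_mul_distrib, Finset.prod_const, hAcard]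
      rw [hprod]
      have h1 := aux_one_sub_prod_le A c (fun k _ => hcle k)
      have h2 : (0:ℝ) ≤ 2 ^ t := by positivity
      simp only [nsmul_eq_mul, mul_one]
      push_cast
      nlinarith [h1, h2]
    calc ∑ A ∈ Finset.univ.powersetCard t, ∑ x ∈ Fintype.piFinset (Tfam A),
          (1 - Real.cos (2 * Real.pi * ψ x))
        ≤ ∑ A ∈ Finset.univ.powersetCard t, (2 : ℝ) ^ t * ∑ k ∈ A, (1 - c k) :=
          Finset.sum_le_sum hper
      _ = (2 : ℝ) ^ t * ∑ A ∈ Finset.univ.powersetCard t, ∑ k ∈ A, (1 - c k) := by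
          rw [Finset.mul_sum]
      _ = (2 : ℝ) ^ t * ((D : ℝ) * ∑ k, (1 - c k)) := by
          congr 1
          have e : ∀ A : Finset (Fin d), ∑ k ∈ A, (1 - c k)
              = ∑ k : Fin d, if k ∈ A then (1 - c k) else 0 := by
            intro A
            rw [Finset.sum_ite_mem, Finset.univ_inter]
          rw [Finset.sum_congr rfl (fun A _ => e A), Finset.sum_comm]
          have e2 : ∀ k : Fin d,
              ∑ A ∈ Finset.univ.powersetCard t (α := Fin d), (if k ∈ A then (1 - c k) else 0)
              = (D : ℝ) * (1 - c k) := by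
            intro k
            rw [← Finset.sum_filter, Finset.sum_const, aux_count_mem_powersetCard ht0 k,
              nsmul_eq_mul, hD]
          rw [Finset.sum_congr rfl (fun k _ => e2 k), ← Finset.mul_sum]
  -- put everything together
  set Scos := ∑ i, Real.cos (Real.pi * ξ i) ^ 2 with hScos
  have hScos0 : 0 ≤ Scos := Finset.sum_nonneg fun i _ => by positivity
  have hsum_c : ∑ k, (1 - c k) ≤ 2 * Scos := by
    refine le_trans (Finset.sum_le_sum fun k _ => hckey k) (le_of_eq ?_)
    rw [hScos, Finset.mul_sum]
  have hchain : ((sphereS d t).card : ℝ)⁻¹ * |R|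
      ≤ ((sphereS d t).card : ℝ)⁻¹ * ((2:ℝ) ^ t * ((D:ℝ) * (2 * Scos))) := by
    refine mul_le_mul_of_nonneg_left ?_ (by positivity)
    refine le_trans hRb (le_trans hTbound ?_)
    refine mul_le_mul_of_nonneg_left ?_ (by positivity)
    exact mul_le_mul_of_nonneg_left hsum_c (Nat.cast_nonneg D)
  refine le_trans hchain (le_of_eq ?_)
  have hDCr : (d:ℝ) * (D:ℝ) = (t:ℝ) * (C:ℝ) := by exact_mod_cast hDC
  have hC0 : (C:ℝ) ≠ 0 := by
    exact_mod_cast Nat.pos_iff_ne_zero.1 hCpos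
  have hd0 : (d:ℝ) ≠ 0 := by
    have : 0 < d := lt_of_lt_of_le (by norm_num) hd1
    exact_mod_cast this.ne'
  rw [hcard]
  push_cast
  have h2t : ((2:ℝ) ^ t) ≠ 0 := by positivity
  field_simp
  linear_combination Scos * hDCr
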